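/- If f : [0,∞) → ℝ is continuously differentiable, f has a finite limit L at infinity, and the integral ∫₀^∞ (f(ax) - f(bx))/x dx converges for a, b > 0, then ∫₀^∞ (f(ax) - f(bx))/x dx = (f(0) - L) · ln(b/a). -/

import Mathlib

open MeasureTheory Real Set Filter
open scoped Topology

theorem frullani (f : ℝ → ℝ) (L : ℝ) (a b : ℝ) (ha : 0 < a) (hb : 0 < b)
    (hf : ContDiffOn ℝ 1 f (Ici 0))
    (hL : Tendsto f atTop (nhds L))
    (hint : IntegrableOn (fun x => (f (a * x) - f (b * x)) / x) (Ioi 0)) :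
    ∫ x in Ioi (0:ℝ), (f (a * x) - f (b * x)) / x = (f 0 - L) * Real.log (b / a) := by
  have hfc : ContinuousOn f (Ici 0) := hf.continuousOn
  set f₀ : ℝ → ℝ := fun x => f (max x 0) with hf₀def
  have hf₀c : Continuous f₀ :=
    hfc.comp_continuous (continuous_id.max continuous_const) (fun x => le_max_right x 0)
  have hf₀eq : ∀ x : ℝ, 0 ≤ x → f₀ x = f x := fun x hx => by
    simp [hf₀def, max_eq_left hx]
  have hf₀0 : f₀ 0 = f 0 := hf₀eq 0 le_rfl
  have hf₀L : Tendsto f₀ atTop (𝓝 L) := by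
    refine hL.congr' ?_
    filter_upwards [eventually_ge_atTop (0:ℝ)] with x hx
    exact (hf₀eq x hx).symm
  -- global bound
  obtain ⟨X, hX⟩ : ∃ X : ℝ, ∀ x ≥ X, |f₀ x - L| ≤ 1 := by
    obtain ⟨X, hX⟩ := (Metric.tendsto_atTop.mp hf₀L) 1 one_pos
    exact ⟨X, fun x hx => le_of_lt (by simpa [Real.dist_eq] using hX x hx)⟩
  obtain ⟨B, hB⟩ := (isCompact_Icc (a := (0:ℝ)) (b := max X 0)).exists_bound_of_continuousOn
    hf₀c.continuousOn
  set C : ℝ := max B (|L| + 1) with hCdef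
  have hC : ∀ x : ℝ, 0 ≤ x → |f₀ x| ≤ C := by
    intro x hx
    rcases le_or_gt x (max X 0) with h | h
    · exact le_trans (hB x ⟨hx, h⟩) (le_max_left _ _)
    · have hxX : x ≥ X := le_trans (le_max_left X 0) h.le
      have := hX x hxX
      have : |f₀ x| ≤ |L| + 1 := by
        have := abs_sub_abs_le_abs_sub (f₀ x) L
        linarith
      exact le_trans this (le_max_right _ _)
  -- substitution lemma
  have hsub : ∀ c p q : ℝ, 0 < c →
      (∫ x in c*p..c*q, f₀ x / x) = ∫ t in p..q, f₀ (c*t) / t := by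
    intro c p q hc
    have h1 := intervalIntegral.integral_comp_mul_left (a := p) (b := q)
      (fun x => f₀ x / x) hc.ne'
    calc (∫ x in c*p..c*q, f₀ x / x)
        = c • ∫ x in p..q, f₀ (c*x) / (c*x) := by
          rw [show (∫ x in p..q, f₀ (c*x) / (c*x)) = c⁻¹ • ∫ x in c*p..c*q, f₀ x / x from h1,
            smul_smul, mul_inv_cancel₀ hc.ne', one_smul]
      _ = ∫ x in p..q, c * (f₀ (c*x) / (c*x)) := by
          rw [← intervalIntegral.integral_smul]; simp only [smul_eq_mul]
      _ = ∫ t in p..q, f₀ (c*t) / t := by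
          refine intervalIntegral.integral_congr fun x _ => ?_
          rcases eq_or_ne x 0 with h | h
          · simp [h]
          · field_simp
  -- integrability of f₀ x / x on positive intervals
  have hgint : ∀ p q : ℝ, 0 < p → 0 < q →
      IntervalIntegrable (fun x => f₀ x / x) volume p q := by
    intro p q hp hq
    apply ContinuousOn.intervalIntegrable
    apply hf₀c.continuousOn.div continuousOn_id
    intro x hx
    exact ne_of_gt (lt_of_lt_of_le (lt_min hp hq) hx.1)
  set S : ℝ → ℝ := fun c => ∫ t in a..b, f₀ (c*t) / t with hSdef
  -- key interval identity
  have hkey : ∀ ε T : ℝ, 0 < ε → 0 < T →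
      (∫ x in ε..T, (f₀ (a*x) - f₀ (b*x)) / x) = S ε - S T := by
    intro ε T hε hT
    have hia : IntervalIntegrable (fun x => f₀ (a*x) / x) volume ε T := by
      apply ContinuousOn.intervalIntegrable
      apply (hf₀c.comp_continuousOn ((continuous_const.mul continuous_id).continuousOn)).div
        continuousOn_id
      intro x hx
      exact ne_of_gt (lt_of_lt_of_le (lt_min hε hT) hx.1)
    have hib : IntervalIntegrable (fun x => f₀ (b*x) / x) volume ε T := by
      apply ContinuousOn.intervalIntegrable
      apply (hf₀c.comp_continuousOn ((continuous_const.mul continuous_id).continuousOn)).div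
        continuousOn_id
      intro x hx
      exact ne_of_gt (lt_of_lt_of_le (lt_min hε hT) hx.1)
    have hsplit : (∫ x in ε..T, (f₀ (a*x) - f₀ (b*x)) / x)
        = (∫ x in ε..T, f₀ (a*x) / x) - ∫ x in ε..T, f₀ (b*x) / x := by
      rw [← intervalIntegral.integral_sub hia hib]
      exact intervalIntegral.integral_congr fun x _ => by ring
    have hA : (∫ x in ε..T, f₀ (a*x) / x) = ∫ x in a*ε..a*T, f₀ x / x := (hsub a ε T ha).symm
    have hB' : (∫ x in ε..T, f₀ (b*x) / x) = ∫ x in b*ε..b*T, f₀ x / x := (hsub b ε T hb).symm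
    have hSε : S ε = ∫ x in ε*a..ε*b, f₀ x / x := (hsub ε a b hε).symm
    have hST : S T = ∫ x in T*a..T*b, f₀ x / x := (hsub T a b hT).symm
    have c1 : (∫ x in ε*a..ε*b, f₀ x / x) + (∫ x in ε*b..T*a, f₀ x / x)
        = ∫ x in ε*a..T*a, f₀ x / x :=
      intervalIntegral.integral_add_adjacent_intervals
        (hgint _ _ (mul_pos hε ha) (mul_pos hε hb))
        (hgint _ _ (mul_pos hε hb) (mul_pos hT ha))
    have c2 : (∫ x in ε*b..T*a, f₀ x / x) + (∫ x in T*a..T*b, f₀ x / x)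
        = ∫ x in ε*b..T*b, f₀ x / x :=
      intervalIntegral.integral_add_adjacent_intervals
        (hgint _ _ (mul_pos hε hb) (mul_pos hT ha))
        (hgint _ _ (mul_pos hT ha) (mul_pos hT hb))
    rw [hsplit, hA, hB', hSε, hST, mul_comm a ε, mul_comm a T, mul_comm b ε, mul_comm b T]
    linarith
  -- dominated convergence helper
  have hab0 : (0:ℝ) < min a b := lt_min ha hb
  have h0ab : (0:ℝ) ∉ Set.uIcc a b := fun h => absurd h.1 (not_le.2 hab0)
  have hboundInt : IntervalIntegrable (fun x => C / x) volume a b := by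
    apply ContinuousOn.intervalIntegrable
    apply continuousOn_const.div continuousOn_id
    intro x hx
    exact ne_of_gt (lt_of_lt_of_le hab0 hx.1)
  have hG : ∀ l : ℝ, (∫ t in a..b, l / t) = l * Real.log (b/a) := by
    intro l
    have h1 := integral_one_div h0ab
    calc (∫ t in a..b, l / t) = ∫ t in a..b, l * (1/t) := by simp only [mul_one_div]
      _ = l * ∫ t in a..b, 1/t := intervalIntegral.integral_const_mul _ _
      _ = l * Real.log (b/a) := by rw [h1]
  have hdom : ∀ (φ : ℕ → ℝ) (l : ℝ), (∀ n, 0 < φ n) →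
      (∀ t ∈ Set.uIcc a b, Tendsto (fun n => f₀ (φ n * t)) atTop (𝓝 l)) →
      Tendsto (fun n => S (φ n)) atTop (𝓝 (l * Real.log (b/a))) := by
    intro φ l hφ hconv
    rw [← hG l]
    apply intervalIntegral.tendsto_integral_filter_of_dominated_convergence (fun x => C / x)
    · refine Eventually.of_forall fun n => ?_
      exact (((hf₀c.comp (continuous_const.mul continuous_id)).measurable.div
        measurable_id).aestronglyMeasurable).restrict
    · refine Eventually.of_forall fun n => ?_
      refine ae_of_all _ fun x hx => ?_
      have hxpos : 0 < x := lt_of_le_of_lt (le_min ha.le hb.le) hx.1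
      rw [Real.norm_eq_abs, abs_div, abs_of_pos hxpos]
      exact (div_le_div_iff_of_pos_right hxpos).2 (hC _ (mul_nonneg (hφ n).le hxpos.le))
    · exact hboundInt
    · refine ae_of_all _ fun x hx => ?_
      have hx' : x ∈ Set.uIcc a b := Set.Ioc_subset_Icc_self hx
      exact (hconv x hx').div_const x
  -- the two limits
  have hφ1 : ∀ n : ℕ, (0:ℝ) < 1/((n:ℝ)+1) := fun n => by positivity
  have hφ2 : ∀ n : ℕ, (0:ℝ) < (n:ℝ)+1 := fun n => by positivity
  have hseq0 : Tendsto (fun n : ℕ => 1/((n:ℝ)+1)) atTop (𝓝 0) :=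
    tendsto_one_div_add_atTop_nhds_zero_nat
  have hlim1 : Tendsto (fun n : ℕ => S (1/((n:ℝ)+1))) atTop (𝓝 (f 0 * Real.log (b/a))) := by
    rw [← hf₀0]
    apply hdom _ _ hφ1
    intro t ht
    have h1 : Tendsto (fun n : ℕ => (1/((n:ℝ)+1)) * t) atTop (𝓝 0) := by
      simpa using hseq0.mul_const t
    exact (hf₀c.tendsto 0).comp h1
  have hlim2 : Tendsto (fun n : ℕ => S ((n:ℝ)+1)) atTop (𝓝 (L * Real.log (b/a))) := by
    apply hdom _ _ hφ2
    intro t ht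
    have htpos : 0 < t := lt_of_lt_of_le hab0 ht.1
    have h1 : Tendsto (fun n : ℕ => ((n:ℝ)+1) * t) atTop atTop := by
      apply Tendsto.atTop_mul_const htpos
      exact tendsto_atTop_add_const_right _ 1 tendsto_natCast_atTop_atTop
    exact hf₀L.comp h1
  -- exhaustion of Ioi 0
  set An : ℕ → Set ℝ := fun n => Ioc (1/((n:ℝ)+1)) ((n:ℝ)+1) with hAndef
  have hmono : Monotone An := by
    intro m n hmn
    apply Ioc_subset_Ioc
    · apply one_div_le_one_div_of_le (hφ2 m)
      exact add_le_add_left (Nat.cast_le.2 hmn) 1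
    · exact add_le_add_left (Nat.cast_le.2 hmn) 1
  have hUnion : ⋃ n, An n = Ioi (0:ℝ) := by
    ext x
    simp only [hAndef, mem_iUnion, mem_Ioc, mem_Ioi]
    constructor
    · rintro ⟨n, h1, h2⟩
      exact lt_trans (hφ1 n) h1
    · intro hx
      obtain ⟨n, hn⟩ := exists_nat_gt (max (1/x) x)
      refine ⟨n, ?_, ?_⟩
      · have h1x : 1/x < (n:ℝ)+1 := lt_trans (lt_of_le_of_lt (le_max_left _ _) hn)
          (by linarith)
        rw [div_lt_iff₀ (hφ2 n)]
        calc (1:ℝ) = x * (1/x) := by field_simp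
          _ < x * ((n:ℝ)+1) := by exact mul_lt_mul_of_pos_left h1x hx
      · have := lt_of_le_of_lt (le_max_right (1/x) x) hn
        linarith
  have hten : Tendsto (fun n => ∫ x in An n, (f (a*x) - f (b*x)) / x) atTop
      (𝓝 (∫ x in Ioi (0:ℝ), (f (a*x) - f (b*x)) / x)) := by
    have h := tendsto_setIntegral_of_monotone (fun n => measurableSet_Ioc) hmono
      (by rw [hUnion]; exact hint)
    rwa [hUnion] at h
  have heq : ∀ n : ℕ, (∫ x in An n, (f (a*x) - f (b*x)) / x)
      = S (1/((n:ℝ)+1)) - S ((n:ℝ)+1) := by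
    intro n
    have hle : (1/((n:ℝ)+1)) ≤ (n:ℝ)+1 := by
      rw [div_le_iff₀ (hφ2 n)]
      nlinarith [Nat.cast_nonneg (α := ℝ) n]
    rw [show (∫ x in An n, (f (a*x) - f (b*x)) / x)
        = ∫ x in (1/((n:ℝ)+1))..((n:ℝ)+1), (f (a*x) - f (b*x)) / x from
      (intervalIntegral.integral_of_le hle).symm]
    rw [show (∫ x in (1/((n:ℝ)+1))..((n:ℝ)+1), (f (a*x) - f (b*x)) / x)
        = ∫ x in (1/((n:ℝ)+1))..((n:ℝ)+1), (f₀ (a*x) - f₀ (b*x)) / x from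
      intervalIntegral.integral_congr fun x hx => ?_]
    · exact hkey _ _ (hφ1 n) (hφ2 n)
    · have hxpos : 0 < x := lt_of_lt_of_le (hφ1 n) (by
        rcases hx with ⟨h1, _⟩
        calc 1/((n:ℝ)+1) = min (1/((n:ℝ)+1)) ((n:ℝ)+1) := (min_eq_left hle).symm
          _ ≤ x := h1)
      rw [hf₀eq _ (mul_nonneg ha.le hxpos.le), hf₀eq _ (mul_nonneg hb.le hxpos.le)]
  have hten2 : Tendsto (fun n : ℕ => S (1/((n:ℝ)+1)) - S ((n:ℝ)+1)) atTop
      (𝓝 (∫ x in Ioi (0:ℝ), (f (a*x) - f (b*x)) / x)) := by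
    refine hten.congr fun n => heq n
  have hten3 : Tendsto (fun n : ℕ => S (1/((n:ℝ)+1)) - S ((n:ℝ)+1)) atTop
      (𝓝 (f 0 * Real.log (b/a) - L * Real.log (b/a))) := hlim1.sub hlim2
  have := tendsto_nhds_unique hten2 hten3
  rw [this]; ring
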